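/- Boundedness of the preconditioned PPA sequence: let f be proper lsc convex with Ω := {x : 0 ∈ ∂f(x)} ≠ ∅, let {M_k} be symmetric positive definite matrices with (1+ρ_k)M_k ⪰ M_{k+1}, M_k ⪰ λ_min·I, Σρ_k < ∞, and let x^{k+1} satisfy ‖x^{k+1} − x̄^{k+1}‖_{M_k} ≤ ε_k with Σε_k < ∞, where x̄^{k+1} = argmin_x { f(x) + (1/(2σ_k))‖x − x^k‖²_{M_k} }. Then dist_{M_{k+1}}(x^{k+1}, Ω) ≤ (1+ρ_k)·dist_{M_k}(x^k, Ω) + (1+ρ_k)ε_k for all k, and the sequence {x^k} is bounded. -/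

import Mathlib

open scoped InnerProductSpace RealInnerProductSpace

variable {n : ℕ}

local notation "E" => EuclideanSpace ℝ (Fin n)

lemma qf_expand (N : E →L[ℝ] E) (hsym : ∀ v w, ⟪N v, w⟫_ℝ = ⟪v, N w⟫_ℝ) (v w : E) :
    ⟪v + w, N (v + w)⟫_ℝ = ⟪v, N v⟫_ℝ + 2 * ⟪v, N w⟫_ℝ + ⟪w, N w⟫_ℝ := by
  have h : ⟪w, N v⟫_ℝ = ⟪v, N w⟫_ℝ := by
    rw [real_inner_comm]; exact hsym v w
  simp only [map_add, inner_add_left, inner_add_right, h]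
  ring

lemma qf_smul (N : E →L[ℝ] E) (t : ℝ) (v : E) :
    ⟪t • v, N (t • v)⟫_ℝ = t ^ 2 * ⟪v, N v⟫_ℝ := by
  simp only [map_smul, inner_smul_left, inner_smul_right, RCLike.conj_to_real]
  ring

lemma qf_neg (N : E →L[ℝ] E) (v : E) : ⟪-v, N (-v)⟫_ℝ = ⟪v, N v⟫_ℝ := by
  simp

lemma qf_cs (N : E →L[ℝ] E) (hsym : ∀ v w, ⟪N v, w⟫_ℝ = ⟪v, N w⟫_ℝ)
    (lam : ℝ) (hlam : 0 < lam) (hlb : ∀ v, lam * ‖v‖ ^ 2 ≤ ⟪v, N v⟫_ℝ)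
    (v w : E) : ⟪v, N w⟫_ℝ ≤ Real.sqrt ⟪v, N v⟫_ℝ * Real.sqrt ⟪w, N w⟫_ℝ := by
  have hnn : ∀ u : E, 0 ≤ ⟪u, N u⟫_ℝ := fun u => le_trans (by positivity) (hlb u)
  rcases eq_or_ne w 0 with rfl | hw
  · simp
  · have hq : 0 < ⟪w, N w⟫_ℝ := lt_of_lt_of_le (mul_pos hlam (pow_pos (norm_pos_iff.mpr hw) 2)) (hlb w)
    have hne : ⟪w, N w⟫_ℝ ≠ 0 := ne_of_gt hq
    set B := ⟪v, N w⟫_ℝ with hB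
    set Q := ⟪w, N w⟫_ℝ with hQ
    have key : 0 ≤ ⟪v, N v⟫_ℝ - B ^ 2 / Q := by
      have h0 := hnn (v + (-(B / Q)) • w)
      rw [qf_expand N hsym, qf_smul] at h0
      have h1 : ⟪v, N ((-(B / Q)) • w)⟫_ℝ = -(B / Q) * B := by
        rw [map_smul, real_inner_smul_right]
      rw [h1] at h0
      have e : ⟪v, N v⟫_ℝ + 2 * (-(B / Q) * B) + (-(B / Q)) ^ 2 * Q
          = ⟪v, N v⟫_ℝ - B ^ 2 / Q := by
        field_simp
        ring
      rw [e] at h0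
      exact h0
    have hsq : B ^ 2 ≤ ⟪v, N v⟫_ℝ * Q := by
      rw [sub_nonneg, div_le_iff₀ hq] at key
      linarith
    calc B ≤ |B| := le_abs_self B
      _ = Real.sqrt (B ^ 2) := (Real.sqrt_sq_eq_abs B).symm
      _ ≤ Real.sqrt (⟪v, N v⟫_ℝ * ⟪w, N w⟫_ℝ) := Real.sqrt_le_sqrt hsq
      _ = _ := Real.sqrt_mul (hnn v) _

lemma qf_triangle (N : E →L[ℝ] E) (hsym : ∀ v w, ⟪N v, w⟫_ℝ = ⟪v, N w⟫_ℝ)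
    (lam : ℝ) (hlam : 0 < lam) (hlb : ∀ v, lam * ‖v‖ ^ 2 ≤ ⟪v, N v⟫_ℝ)
    (v w : E) : Real.sqrt ⟪v + w, N (v + w)⟫_ℝ ≤
      Real.sqrt ⟪v, N v⟫_ℝ + Real.sqrt ⟪w, N w⟫_ℝ := by
  have hnn : ∀ u : E, 0 ≤ ⟪u, N u⟫_ℝ := fun u => le_trans (by positivity) (hlb u)
  have h := qf_cs N hsym lam hlam hlb v w
  have h2 : ⟪v + w, N (v + w)⟫_ℝ ≤ (Real.sqrt ⟪v, N v⟫_ℝ + Real.sqrt ⟪w, N w⟫_ℝ) ^ 2 := by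
    rw [qf_expand N hsym]
    have hv := Real.sq_sqrt (hnn v); have hw := Real.sq_sqrt (hnn w)
    nlinarith [h, hv, hw]
  calc Real.sqrt ⟪v + w, N (v + w)⟫_ℝ ≤
      Real.sqrt ((Real.sqrt ⟪v, N v⟫_ℝ + Real.sqrt ⟪w, N w⟫_ℝ) ^ 2) := Real.sqrt_le_sqrt h2
    _ = _ := Real.sqrt_sq (by positivity)

lemma prox_key (f : E → ℝ) (hf : ConvexOn ℝ Set.univ f)
    (N : E →L[ℝ] E) (hsym : ∀ v w, ⟪N v, w⟫_ℝ = ⟪v, N w⟫_ℝ)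
    (hnn : ∀ v : E, 0 ≤ ⟪v, N v⟫_ℝ)
    (c : ℝ) (hc : 0 < c) (xk xb z : E)
    (hz : ∀ y, f z ≤ f y)
    (hmin : ∀ y, f xb + c * ⟪xb - xk, N (xb - xk)⟫_ℝ ≤ f y + c * ⟪y - xk, N (y - xk)⟫_ℝ) :
    ⟪z - xb, N (z - xb)⟫_ℝ ≤ ⟪z - xk, N (z - xk)⟫_ℝ := by
  set u := xb - xk with hu
  set d := z - xb with hd
  set B := ⟪u, N d⟫_ℝ with hB
  -- Step 1: 0 ≤ B
  have step1 : 0 ≤ B := by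
    have key : ∀ t : ℝ, 0 < t → t ≤ 1 → 0 ≤ 2 * B + t * ⟪d, N d⟫_ℝ := by
      intro t ht ht1
      have hconv := hf.2 (Set.mem_univ xb) (Set.mem_univ z)
        (show (0:ℝ) ≤ 1 - t by linarith) ht.le (show (1 - t) + t = 1 by ring)
      have hp : (1 - t) • xb + t • z = xb + t • d := by
        rw [hd]; module
      rw [hp] at hconv
      simp only [smul_eq_mul] at hconv
      have hpq : (xb + t • d) - xk = u + t • d := by rw [hu]; abel
      have hq := hmin (xb + t • d)
      rw [hpq, qf_expand N hsym, qf_smul] at hq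
      have hBd : ⟪u, N (t • d)⟫_ℝ = t * B := by rw [map_smul, real_inner_smul_right]
      rw [hBd] at hq
      have hfz : f z ≤ f xb := hz xb
      have h3 : t * f xb ≤ t * f z + c * (2 * (t * B)) + c * (t ^ 2 * ⟪d, N d⟫_ℝ) := by
        have := hq.trans (by linarith : f (xb + t • d) + c * (⟪u, N u⟫_ℝ + 2 * (t * B) + t ^ 2 * ⟪d, N d⟫_ℝ) ≤ ((1 - t) * f xb + t * f z) + c * (⟪u, N u⟫_ℝ + 2 * (t * B) + t ^ 2 * ⟪d, N d⟫_ℝ))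
        nlinarith [this]
      have h4 : 0 ≤ c * t * (2 * B + t * ⟪d, N d⟫_ℝ) := by nlinarith [h3, mul_le_mul_of_nonneg_left hfz (le_of_lt ht)]
      have h4' : 0 ≤ (c * t) * (2 * B + t * ⟪d, N d⟫_ℝ) := h4
      exact nonneg_of_mul_nonneg_right h4' (mul_pos hc ht)
    -- take t → 0
    have hlim : ∀ m : ℕ, -(2 * B) ≤ (1 : ℝ) / (m + 1) * ⟪d, N d⟫_ℝ := by
      intro m
      have hm : (0 : ℝ) < 1 / (m + 1) := by positivity
      have hm1 : (1 : ℝ) / (m + 1) ≤ 1 := by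
        rw [div_le_one (by positivity)]; linarith [Nat.cast_nonneg (α := ℝ) m]
      linarith [key _ hm hm1]
    have htend : Filter.Tendsto (fun m : ℕ => (1 : ℝ) / (m + 1) * ⟪d, N d⟫_ℝ)
        Filter.atTop (nhds 0) := by
      have := tendsto_one_div_add_atTop_nhds_zero_nat (𝕜 := ℝ)
      simpa using this.mul_const ⟪d, N d⟫_ℝ
    have := ge_of_tendsto' htend hlim
    linarith
  -- Step 2
  have hzxk : z - xk = d + u := by rw [hd, hu]; abel
  rw [hzxk, qf_expand N hsym]
  have hdu : ⟪d, N u⟫_ℝ = B := by rw [hB, real_inner_comm, hsym]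
  rw [hdu]
  linarith [hnn u]

/-- boundedness of the preconditioned PPA sequence under criterion (A):
`dist_{M_{k+1}}(x^{k+1}, Ω) ≤ (1+ρ_k) dist_{M_k}(x^k, Ω) + (1+ρ_k) ε_k` and `{x^k}`
is bounded. Here `Ω = (∂f)⁻¹(0)` is the (nonempty) set of minimizers of the convex
function `f`. -/
theorem preconditioned_ppa_bounded {n : ℕ}
    (f : EuclideanSpace ℝ (Fin n) → ℝ)
    (hf_conv : ConvexOn ℝ Set.univ f) (hf_lsc : LowerSemicontinuous f)
    (Ω : Set (EuclideanSpace ℝ (Fin n)))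
    (hΩ : Ω = {z | ∀ y, f z ≤ f y}) (hΩne : Ω.Nonempty)
    (σ : ℕ → ℝ) (hσ : ∀ k, 0 < σ k) (hσmono : Monotone σ)
    (ρ : ℕ → ℝ) (hρ : ∀ k, 0 ≤ ρ k) (hρsum : Summable ρ)
    (ε : ℕ → ℝ) (hε : ∀ k, 0 ≤ ε k) (hεsum : Summable ε)
    (lammin : ℝ) (hlammin : 0 < lammin)
    (M : ℕ → (EuclideanSpace ℝ (Fin n) →L[ℝ] EuclideanSpace ℝ (Fin n)))
    (hM_sym : ∀ k, ∀ v w, ⟪M k v, w⟫_ℝ = ⟪v, M k w⟫_ℝ)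
    (hM_lb : ∀ k, ∀ v, lammin * ‖v‖ ^ 2 ≤ ⟪v, M k v⟫_ℝ)
    (hM_dec : ∀ k, ∀ v, ⟪v, M (k + 1) v⟫_ℝ ≤ (1 + ρ k) * ⟪v, M k v⟫_ℝ)
    (nM : ℕ → EuclideanSpace ℝ (Fin n) → ℝ)
    (hnM : ∀ k v, nM k v = Real.sqrt ⟪v, M k v⟫_ℝ)
    (distM : ℕ → EuclideanSpace ℝ (Fin n) → ℝ)
    (hdistM : ∀ k x, distM k x = ⨅ y : Ω, nM k ((y : EuclideanSpace ℝ (Fin n)) - x))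
    (x xbar : ℕ → EuclideanSpace ℝ (Fin n))
    (hxbar : ∀ k, IsMinOn
      (fun z => f z + (1 / (2 * σ k)) * (nM k (z - x k)) ^ 2) Set.univ (xbar (k + 1)))
    (happrox : ∀ k, nM k (x (k + 1) - xbar (k + 1)) ≤ ε k) :
    (∀ k, distM (k + 1) (x (k + 1)) ≤ (1 + ρ k) * distM k (x k) + (1 + ρ k) * ε k) ∧
      Bornology.IsBounded (Set.range x) := by
  have hqnn : ∀ k v, 0 ≤ ⟪v, M k v⟫_ℝ := fun k v => le_trans (by positivity) (hM_lb k v)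
  have hnMnn : ∀ k v, 0 ≤ nM k v := fun k v => by rw [hnM]; exact Real.sqrt_nonneg _
  have hρ1 : ∀ k, (0:ℝ) < 1 + ρ k := fun k => by linarith [hρ k]
  -- key pointwise estimate
  have key : ∀ k, ∀ z ∈ Ω, nM (k+1) (z - x (k+1)) ≤ (1 + ρ k) * (nM k (z - x k) + ε k) := by
    intro k z hz
    have e : ∀ w : EuclideanSpace ℝ (Fin n), (nM k w) ^ 2 = ⟪w, M k w⟫_ℝ := fun w => by
      rw [hnM]; exact Real.sq_sqrt (hqnn k w)
    have hmin' : ∀ y, f (xbar (k+1)) + (1/(2*σ k)) * ⟪xbar (k+1) - x k, M k (xbar (k+1) - x k)⟫_ℝ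
        ≤ f y + (1/(2*σ k)) * ⟪y - x k, M k (y - x k)⟫_ℝ := by
      intro y
      have h := isMinOn_iff.mp (hxbar k) y (Set.mem_univ y)
      simpa only [e] using h
    have hc : 0 < 1/(2*σ k) := by have := hσ k; positivity
    have hz' : ∀ y, f z ≤ f y := by rw [hΩ] at hz; exact hz
    have hprox := prox_key f hf_conv (M k) (hM_sym k) (hqnn k) _ hc (x k) (xbar (k+1)) z hz' hmin'
    -- norm comparison between M (k+1) and M k
    have s1 : nM (k+1) (z - x (k+1)) ≤ (1 + ρ k) * nM k (z - x (k+1)) := by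
      rw [hnM, hnM]
      have hsq : Real.sqrt (1 + ρ k) ≤ 1 + ρ k := by
        have h1 : Real.sqrt (1 + ρ k) ≤ Real.sqrt ((1 + ρ k) ^ 2) :=
          Real.sqrt_le_sqrt (by nlinarith [hρ k])
        rwa [Real.sqrt_sq (hρ1 k).le] at h1
      calc Real.sqrt ⟪z - x (k+1), M (k+1) (z - x (k+1))⟫_ℝ
          ≤ Real.sqrt ((1 + ρ k) * ⟪z - x (k+1), M k (z - x (k+1))⟫_ℝ) :=
            Real.sqrt_le_sqrt (hM_dec k _)
        _ = Real.sqrt (1 + ρ k) * Real.sqrt ⟪z - x (k+1), M k (z - x (k+1))⟫_ℝ :=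
            Real.sqrt_mul (hρ1 k).le _
        _ ≤ (1 + ρ k) * Real.sqrt ⟪z - x (k+1), M k (z - x (k+1))⟫_ℝ :=
            mul_le_mul_of_nonneg_right hsq (Real.sqrt_nonneg _)
    -- triangle inequality
    have s2 : nM k (z - x (k+1)) ≤ nM k (z - xbar (k+1)) + nM k (xbar (k+1) - x (k+1)) := by
      have hsplit : z - x (k+1) = (z - xbar (k+1)) + (xbar (k+1) - x (k+1)) := by abel
      rw [hsplit, hnM, hnM, hnM]
      exact qf_triangle (M k) (hM_sym k) lammin hlammin (hM_lb k) _ _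
    have s3 : nM k (xbar (k+1) - x (k+1)) ≤ ε k := by
      have hneg : xbar (k+1) - x (k+1) = -(x (k+1) - xbar (k+1)) := by abel
      rw [hneg, hnM, qf_neg, ← hnM]
      exact happrox k
    have s4 : nM k (z - xbar (k+1)) ≤ nM k (z - x k) := by
      rw [hnM, hnM]
      exact Real.sqrt_le_sqrt hprox
    have s5 : nM k (z - x (k+1)) ≤ nM k (z - x k) + ε k := by linarith
    calc nM (k+1) (z - x (k+1)) ≤ (1 + ρ k) * nM k (z - x (k+1)) := s1
      _ ≤ (1 + ρ k) * (nM k (z - x k) + ε k) :=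
          mul_le_mul_of_nonneg_left s5 (hρ1 k).le
  haveI hne : Nonempty Ω := hΩne.to_subtype
  constructor
  · -- Part 1
    intro k
    have bdd : ∀ (j : ℕ) (p : EuclideanSpace ℝ (Fin n)),
        BddBelow (Set.range fun y : Ω => nM j ((y : EuclideanSpace ℝ (Fin n)) - p)) := by
      intro j p
      refine ⟨0, ?_⟩
      rintro a ⟨y, rfl⟩
      exact hnMnn j _
    have h1 : ∀ y : Ω, distM (k+1) (x (k+1)) ≤
        (1 + ρ k) * nM k ((y : EuclideanSpace ℝ (Fin n)) - x k) + (1 + ρ k) * ε k := by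
      intro y
      rw [hdistM]
      refine (ciInf_le (bdd (k+1) (x (k+1))) y).trans ?_
      have := key k y y.2
      nlinarith [this]
    have h2 : (distM (k+1) (x (k+1)) - (1 + ρ k) * ε k) / (1 + ρ k) ≤ distM k (x k) := by
      rw [hdistM k (x k)]
      apply le_ciInf
      intro y
      rw [div_le_iff₀ (hρ1 k)]
      nlinarith [h1 y]
    rw [div_le_iff₀ (hρ1 k)] at h2
    nlinarith [h2]
  · -- Part 2: boundedness
    obtain ⟨z, hzΩ⟩ := hΩne
    have hrec : ∀ k, nM (k+1) (z - x (k+1)) ≤ (1 + ρ k) * (nM k (z - x k) + ε k) :=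
      fun k => key k z hzΩ
    have hP1 : ∀ k, (1:ℝ) ≤ ∏ j ∈ Finset.range k, (1 + ρ j) := by
      intro k
      calc (1:ℝ) = ∏ j ∈ Finset.range k, 1 := by simp
        _ ≤ _ := Finset.prod_le_prod (fun _ _ => zero_le_one) (fun j _ => by linarith [hρ j])
    have hbound : ∀ k, nM k (z - x k) ≤
        (∏ j ∈ Finset.range k, (1 + ρ j)) * (nM 0 (z - x 0) + ∑ j ∈ Finset.range k, ε j) := by
      intro k
      induction k with
      | zero => simp
      | succ k ih =>
        have hPnn : (0:ℝ) ≤ ∏ j ∈ Finset.range k, (1 + ρ j) := le_trans zero_le_one (hP1 k)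
        have hεP : ε k ≤ (∏ j ∈ Finset.range k, (1 + ρ j)) * ε k :=
          le_mul_of_one_le_left (hε k) (hP1 k)
        calc nM (k+1) (z - x (k+1)) ≤ (1 + ρ k) * (nM k (z - x k) + ε k) := hrec k
          _ ≤ (1 + ρ k) * ((∏ j ∈ Finset.range k, (1 + ρ j)) * (nM 0 (z - x 0) + ∑ j ∈ Finset.range k, ε j)
                + (∏ j ∈ Finset.range k, (1 + ρ j)) * ε k) :=
              mul_le_mul_of_nonneg_left (by linarith) (hρ1 k).le
          _ = (∏ j ∈ Finset.range (k+1), (1 + ρ j)) *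
                (nM 0 (z - x 0) + ∑ j ∈ Finset.range (k+1), ε j) := by
              rw [Finset.prod_range_succ, Finset.sum_range_succ]; ring
    have hPb : ∀ k, (∏ j ∈ Finset.range k, (1 + ρ j)) ≤ Real.exp (∑' j, ρ j) := by
      intro k
      calc (∏ j ∈ Finset.range k, (1 + ρ j)) ≤ ∏ j ∈ Finset.range k, Real.exp (ρ j) :=
            Finset.prod_le_prod (fun j _ => by linarith [hρ j])
              (fun j _ => by linarith [Real.add_one_le_exp (ρ j)])
        _ = Real.exp (∑ j ∈ Finset.range k, ρ j) := (Real.exp_sum _ _).symm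
        _ ≤ Real.exp (∑' j, ρ j) :=
            Real.exp_le_exp.mpr (Summable.sum_le_tsum _ (fun j _ => hρ j) hρsum)
    have hEb : ∀ k, (∑ j ∈ Finset.range k, ε j) ≤ ∑' j, ε j :=
      fun k => Summable.sum_le_tsum _ (fun j _ => hε j) hεsum
    set C := Real.exp (∑' j, ρ j) * (nM 0 (z - x 0) + ∑' j, ε j) with hC
    have hA0 : 0 ≤ nM 0 (z - x 0) := hnMnn 0 _
    have hAb : ∀ k, nM k (z - x k) ≤ C := by
      intro k
      refine (hbound k).trans ?_
      rw [hC]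
      have hEnn : (0:ℝ) ≤ ∑ j ∈ Finset.range k, ε j :=
        Finset.sum_nonneg fun j _ => hε j
      exact mul_le_mul (hPb k) (by linarith [hEb k]) (by linarith) (Real.exp_nonneg _)
    have hnorm : ∀ k, ‖x k - z‖ ≤ C / Real.sqrt lammin := by
      intro k
      have h1 : Real.sqrt lammin * ‖x k - z‖ ≤ nM k (z - x k) := by
        have h := Real.sqrt_le_sqrt (hM_lb k (z - x k))
        rw [Real.sqrt_mul hlammin.le, Real.sqrt_sq (norm_nonneg _)] at h
        rw [hnM, norm_sub_rev]
        exact h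
      rw [le_div_iff₀ (Real.sqrt_pos.mpr hlammin)]
      calc ‖x k - z‖ * Real.sqrt lammin = Real.sqrt lammin * ‖x k - z‖ := mul_comm _ _
        _ ≤ nM k (z - x k) := h1
        _ ≤ C := hAb k
    have hsub : Set.range x ⊆ Metric.closedBall z (C / Real.sqrt lammin) := by
      rintro _ ⟨k, rfl⟩
      rw [Metric.mem_closedBall, dist_eq_norm]
      exact hnorm k
    exact Metric.isBounded_closedBall.subset hsub
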